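/- Let M(t) = 1 + Σ m_i t^i and R(t) = 1 + Σ r_i t^i be formal power series with M(t) = R(tM(t)). Then the coefficients satisfy Speicher's free moment-cumulant relation: m_n = Σ over noncrossing partitions π of {1,…,n} of ∏_{B ∈ π} r_{|B|}. -/

import Mathlib

open Finset Nat PowerSeries
open scoped Classical

/-- Composition `R(f)` of formal power series, valid when `f` has zero constant term. -/
noncomputable def psComp (R f : PowerSeries ℚ) : PowerSeries ℚ :=
  PowerSeries.mk fun n => ∑ k ∈ Finset.range (n + 1), coeff k R * coeff n (f ^ k)

/-- A set partition `π` of `{1,…,n}` is noncrossing if there are no `i < j < k < l`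
with `i, k` in one block and `j, l` in a different block. -/
def Noncrossing {n : ℕ} (π : Finpartition (Finset.univ : Finset (Fin n))) : Prop :=
  ∀ B₁ ∈ π.parts, ∀ B₂ ∈ π.parts, ∀ i j k l : Fin n,
    i < j → j < k → k < l → i ∈ B₁ → k ∈ B₁ → j ∈ B₂ → l ∈ B₂ → B₁ = B₂

section NCaux

open Finpartition

variable {α : Type*} {β : Type*}

/-- Generalized noncrossing predicate for a partition of a finset in a linear order. -/
def NCg {α : Type*} [LT α] [DecidableEq α] {s : Finset α} (π : Finpartition s) : Prop :=
  ∀ B₁ ∈ π.parts, ∀ B₂ ∈ π.parts, ∀ i j k l : α,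
    i < j → j < k → k < l → i ∈ B₁ → k ∈ B₁ → j ∈ B₂ → l ∈ B₂ → B₁ = B₂

noncomputable def Wsum {α : Type*} [LT α] [DecidableEq α] (F : ℕ → ℚ) (s : Finset α) : ℚ :=
  ∑ π : Finpartition s, if NCg π then ∏ B ∈ π.parts, F B.card else 0

noncomputable def Vsum (r : ℕ → ℚ) (j k : ℕ) : ℚ :=
  ∑ π : Finpartition (Finset.range k),
    if NCg π then r ((π.part 0).card + j) * ∏ B ∈ π.parts.erase (π.part 0), r B.card else 0

lemma part_subs [DecidableEq α] {s : Finset α} (P : Finpartition s) (a : α) :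
    P.part a ⊆ s := by
  by_cases ha : a ∈ s
  · exact P.le (P.part_mem.2 ha)
  · simp [Finpartition.part, dif_neg ha]

/-- Transport of a finpartition along an injection. -/
def mapP [DecidableEq α] [DecidableEq β] (g : α ↪ β) {s : Finset α} (P : Finpartition s) :
    Finpartition (s.map g) where
  parts := P.parts.image (fun B => B.map g)
  supIndep := by
    rw [Finset.supIndep_iff_pairwiseDisjoint]
    rintro x hx y hy hxy
    simp only [coe_image, Set.mem_image, mem_coe] at hx hy
    obtain ⟨B₁, hB₁, rfl⟩ := hx
    obtain ⟨B₂, hB₂, rfl⟩ := hy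
    have hne : B₁ ≠ B₂ := fun h => hxy (by rw [h])
    exact (Finset.disjoint_map g).2 (P.disjoint hB₁ hB₂ hne)
  sup_parts := by
    ext x
    simp only [Finset.sup_image, Function.comp, id_eq, Finset.mem_sup, Finset.mem_map]
    constructor
    · rintro ⟨B, hB, y, hy, rfl⟩
      exact ⟨y, P.le hB hy, rfl⟩
    · rintro ⟨y, hy, rfl⟩
      obtain ⟨B, hB, hyB⟩ := P.exists_mem hy
      exact ⟨B, hB, y, hyB, rfl⟩
  bot_notMem := by
    simp only [bot_eq_empty, Finset.mem_image]
    rintro ⟨B, hB, h⟩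
    exact P.bot_notMem (by
      have : B = ∅ := Finset.map_eq_empty.1 h
      rwa [this] at hB)

lemma mapP_parts [DecidableEq α] [DecidableEq β] (g : α ↪ β) {s : Finset α}
    (P : Finpartition s) : (mapP g P).parts = P.parts.image (fun B => B.map g) := rfl

/-- Inverse transport. -/
noncomputable def comapP [DecidableEq α] [DecidableEq β] (g : α ↪ β) {s : Finset α}
    (Q : Finpartition (s.map g)) : Finpartition s where
  parts := Q.parts.image (fun B => B.preimage g g.injective.injOn)
  supIndep := by
    rw [Finset.supIndep_iff_pairwiseDisjoint]
    rintro x hx y hy hxy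
    simp only [coe_image, Set.mem_image, mem_coe] at hx hy
    obtain ⟨B₁, hB₁, rfl⟩ := hx
    obtain ⟨B₂, hB₂, rfl⟩ := hy
    have hne : B₁ ≠ B₂ := fun h => hxy (by rw [h])
    have hd : Disjoint B₁ B₂ := Q.disjoint hB₁ hB₂ hne
    show Disjoint (B₁.preimage g g.injective.injOn) (B₂.preimage g g.injective.injOn)
    rw [Finset.disjoint_left] at hd ⊢
    intro a ha ha'
    rw [Finset.mem_preimage] at ha ha'
    exact hd ha ha'
  sup_parts := by
    ext x
    simp only [Finset.sup_image, Function.comp, id_eq, Finset.mem_sup, Finset.mem_preimage]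
    constructor
    · rintro ⟨B, hB, hx⟩
      have hx' : g x ∈ B := hx
      have := Q.le hB hx'
      rwa [Finset.mem_map' g] at this
    · intro hx
      obtain ⟨B, hB, hxB⟩ := Q.exists_mem (Finset.mem_map_of_mem g hx)
      exact ⟨B, hB, hxB⟩
  bot_notMem := by
    simp only [bot_eq_empty, Finset.mem_image]
    rintro ⟨B, hB, h⟩
    obtain ⟨y, hy⟩ := Q.nonempty_of_mem_parts hB
    obtain ⟨x, hx, rfl⟩ := Finset.mem_map.1 (Q.le hB hy)
    have : x ∈ B.preimage g g.injective.injOn := Finset.mem_preimage.2 hy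
    rw [h] at this
    exact absurd this (Finset.notMem_empty x)

lemma comapP_mapP [DecidableEq α] [DecidableEq β] (g : α ↪ β) {s : Finset α}
    (P : Finpartition s) : comapP g (mapP g P) = P := by
  ext1
  show ((P.parts.image _).image _) = P.parts
  rw [Finset.image_image]
  refine Finset.image_congr ?_ |>.trans (Finset.image_id)
  intro B hB
  exact Finset.preimage_map g B

lemma mapP_comapP [DecidableEq α] [DecidableEq β] (g : α ↪ β) {s : Finset α}
    (Q : Finpartition (s.map g)) : mapP g (comapP g Q) = Q := by
  ext1
  show ((Q.parts.image _).image _) = Q.parts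
  rw [Finset.image_image]
  refine Finset.image_congr ?_ |>.trans (Finset.image_id)
  intro B hB
  have hBs : B ⊆ s.map g := Q.le hB
  ext y
  simp only [Function.comp_apply, Finset.mem_map, Finset.mem_preimage]
  constructor
  · rintro ⟨x, hx, rfl⟩; exact hx
  · intro hy
    obtain ⟨x, _, rfl⟩ := Finset.mem_map.1 (hBs hy)
    exact ⟨x, hy, rfl⟩

lemma NCg_mapP [LT α] [DecidableEq α] [LT β] [DecidableEq β] (g : α ↪ β)
    (hg : ∀ x y, x < y ↔ g x < g y)
    {s : Finset α} (P : Finpartition s) : NCg (mapP g P) ↔ NCg P := by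
  constructor
  · intro h B₁ hB₁ B₂ hB₂ i j k l hij hjk hkl hi hk hj hl
    have := h (B₁.map g) (Finset.mem_image_of_mem _ hB₁) (B₂.map g)
      (Finset.mem_image_of_mem _ hB₂) (g i) (g j) (g k) (g l) ((hg _ _).1 hij) ((hg _ _).1 hjk)
      ((hg _ _).1 hkl)
      (Finset.mem_map_of_mem g hi) (Finset.mem_map_of_mem g hk)
      (Finset.mem_map_of_mem g hj) (Finset.mem_map_of_mem g hl)
    exact Finset.map_injective g this
  · intro h A₁ hA₁ A₂ hA₂ i j k l hij hjk hkl hi hk hj hl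
    rw [mapP_parts] at hA₁ hA₂
    obtain ⟨B₁, hB₁, rfl⟩ := Finset.mem_image.1 hA₁
    obtain ⟨B₂, hB₂, rfl⟩ := Finset.mem_image.1 hA₂
    obtain ⟨i', hi', rfl⟩ := Finset.mem_map.1 hi
    obtain ⟨k', hk', rfl⟩ := Finset.mem_map.1 hk
    obtain ⟨j', hj', rfl⟩ := Finset.mem_map.1 hj
    obtain ⟨l', hl', rfl⟩ := Finset.mem_map.1 hl
    have := h B₁ hB₁ B₂ hB₂ i' j' k' l' ((hg _ _).2 hij) ((hg _ _).2 hjk)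
      ((hg _ _).2 hkl) hi' hk' hj' hl'
    rw [this]

lemma Wsum_map [LT α] [DecidableEq α] [LT β] [DecidableEq β] (g : α ↪ β)
    (hg : ∀ x y, x < y ↔ g x < g y)
    (F : ℕ → ℚ) (s : Finset α) : Wsum F (s.map g) = Wsum F s := by
  refine (Fintype.sum_equiv
    (⟨mapP g, comapP g, comapP_mapP g, mapP_comapP g⟩ : Finpartition s ≃ Finpartition (s.map g))
    _ _ ?_).symm
  intro P
  simp only [Equiv.coe_fn_mk]
  rw [NCg_mapP g hg]
  congr 1
  rw [mapP_parts, Finset.prod_image (fun B _ B' _ h => Finset.map_injective g h)]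
  exact Finset.prod_congr rfl fun B _ => by rw [Finset.card_map]

lemma part_mem_of_ne_empty [DecidableEq α] {s : Finset α} (P : Finpartition s) {a : α}
    (h : P.part a ≠ ∅) : P.part a ∈ P.parts := by
  by_cases ha : a ∈ s
  · exact P.part_mem.2 ha
  · exact absurd (by simp [Finpartition.part, dif_neg ha]) h

/-- Restriction of a finpartition to a subset. -/
noncomputable def restrictP [DecidableEq α] {s : Finset α} (P : Finpartition s) (t : Finset α)
    (ht : t ⊆ s) : Finpartition t :=
  Finpartition.ofErase (P.parts.image (· ∩ t))
    (by
      rw [Finset.supIndep_iff_pairwiseDisjoint]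
      rintro x hx y hy hxy
      simp only [coe_image, Set.mem_image, mem_coe] at hx hy
      obtain ⟨B₁, hB₁, rfl⟩ := hx
      obtain ⟨B₂, hB₂, rfl⟩ := hy
      have hne : B₁ ≠ B₂ := fun h => hxy (by rw [h])
      have hd : Disjoint B₁ B₂ := P.disjoint hB₁ hB₂ hne
      exact hd.mono Finset.inter_subset_left Finset.inter_subset_left)
    (by
      ext x
      simp only [Finset.sup_image, Function.comp, id_eq, Finset.mem_sup, Finset.mem_inter]
      constructor
      · rintro ⟨B, hB, hx, hxt⟩; exact hxt
      · intro hx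
        obtain ⟨B, hB, hxB⟩ := P.exists_mem (ht hx)
        exact ⟨B, hB, hxB, hx⟩)

lemma mem_restrictP [DecidableEq α] {s : Finset α} (P : Finpartition s) (t : Finset α)
    (ht : t ⊆ s) {A : Finset α} :
    A ∈ (restrictP P t ht).parts ↔ A ≠ ∅ ∧ ∃ B ∈ P.parts, B ∩ t = A := by
  simp only [restrictP, Finpartition.ofErase, Finset.mem_erase, Finset.mem_image,
    bot_eq_empty]

lemma NCg_restrictP [LT α] [DecidableEq α] {s : Finset α} (P : Finpartition s) (t : Finset α)
    (ht : t ⊆ s) (h : NCg P) : NCg (restrictP P t ht) := by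
  intro A₁ hA₁ A₂ hA₂ i j k l hij hjk hkl hi hk hj hl
  rw [mem_restrictP] at hA₁ hA₂
  obtain ⟨-, B₁, hB₁, rfl⟩ := hA₁
  obtain ⟨-, B₂, hB₂, rfl⟩ := hA₂
  rw [h B₁ hB₁ B₂ hB₂ i j k l hij hjk hkl (Finset.mem_inter.1 hi).1 (Finset.mem_inter.1 hk).1
    (Finset.mem_inter.1 hj).1 (Finset.mem_inter.1 hl).1]

section Glue

variable {n b : ℕ} (hb : b ≤ n) (π₁ : Finpartition (Finset.range b))
  (π₂ : Finpartition (Finset.Icc (b + 1) n))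

lemma p1_subset {B : Finset ℕ} (hB : B ∈ π₁.parts) : ∀ x ∈ B, x < b := by
  intro x hx
  have := π₁.le hB hx
  simpa using this

lemma p2_subset {B : Finset ℕ} (hB : B ∈ π₂.parts) : ∀ x ∈ B, b + 1 ≤ x ∧ x ≤ n := by
  intro x hx
  have := π₂.le hB hx
  simpa using this

lemma part0_lt : ∀ x ∈ π₁.part 0, x < b := by
  intro x hx
  have := part_subs π₁ 0 hx
  simpa using this

/-- Glue a partition of `[0,b)`, the point `b` (added to the block of `0`), and a partition
of `[b+1,n]` into a partition of `[0,n]`. -/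
noncomputable def glueP : Finpartition (Finset.range (n + 1)) where
  parts := insert (insert b (π₁.part 0)) (π₁.parts.erase (π₁.part 0) ∪ π₂.parts)
  supIndep := by
    rw [Finset.supIndep_iff_pairwiseDisjoint]
    rintro x hx y hy hxy
    simp only [coe_insert, coe_union, Set.mem_insert_iff, Set.mem_union, mem_coe,
      Finset.mem_erase] at hx hy
    have key : ∀ u v : Finset ℕ,
        (u = insert b (π₁.part 0) ∨ (u ≠ π₁.part 0 ∧ u ∈ π₁.parts) ∨ u ∈ π₂.parts) →
        (v = insert b (π₁.part 0) ∨ (v ≠ π₁.part 0 ∧ v ∈ π₁.parts) ∨ v ∈ π₂.parts) →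
        u ≠ v → Disjoint u v := by
      rintro u v (rfl | ⟨hu0, hu⟩ | hu) (rfl | ⟨hv0, hv⟩ | hv) huv
      · exact absurd rfl huv
      · rw [Finset.disjoint_left]
        rintro a ha ha'
        rcases Finset.mem_insert.1 ha with rfl | ha
        · exact absurd (p1_subset π₁ hv a ha') (lt_irrefl a)
        · have h0 : π₁.part 0 ∈ π₁.parts := part_mem_of_ne_empty π₁ (by
            intro h; rw [h] at ha; exact absurd ha (Finset.notMem_empty a))
          exact Finset.disjoint_left.1 (π₁.disjoint h0 hv (Ne.symm hv0)) ha ha'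
      · rw [Finset.disjoint_left]
        rintro a ha ha'
        have h2 := p2_subset π₂ hv a ha'
        rcases Finset.mem_insert.1 ha with rfl | ha
        · omega
        · have := part0_lt π₁ a ha; omega
      · rw [disjoint_comm, Finset.disjoint_left]
        rintro a ha ha'
        rcases Finset.mem_insert.1 ha with rfl | ha
        · exact absurd (p1_subset π₁ hu a ha') (lt_irrefl a)
        · have h0 : π₁.part 0 ∈ π₁.parts := part_mem_of_ne_empty π₁ (by
            intro h; rw [h] at ha; exact absurd ha (Finset.notMem_empty a))
          exact Finset.disjoint_left.1 (π₁.disjoint h0 hu (fun h => hu0 h.symm)) ha ha'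
      · exact π₁.disjoint hu hv huv
      · rw [Finset.disjoint_left]
        intro a ha ha'
        have := p1_subset π₁ hu a ha
        have := p2_subset π₂ hv a ha'
        omega
      · rw [disjoint_comm, Finset.disjoint_left]
        rintro a ha ha'
        rcases Finset.mem_insert.1 ha with rfl | ha
        · have := p2_subset π₂ hu a ha'; omega
        · have := part0_lt π₁ a ha
          have := p2_subset π₂ hu a ha'
          omega
      · rw [Finset.disjoint_left]
        intro a ha ha'
        have := p2_subset π₂ hu a ha
        have := p1_subset π₁ hv a ha'
        omega
      · exact π₂.disjoint hu hv huv
    exact key x y hx hy hxy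
  sup_parts := by
    ext x
    simp only [Finset.mem_sup, Finset.mem_insert, Finset.mem_union, Finset.mem_erase,
      Finset.mem_range]
    constructor
    · rintro ⟨B, (rfl | ⟨-, hB⟩ | hB), hx⟩
      · rcases Finset.mem_insert.1 hx with rfl | hx
        · omega
        · have := part0_lt π₁ x hx; omega
      · have := p1_subset π₁ hB x hx; omega
      · have := p2_subset π₂ hB x hx; omega
    · intro hx
      rcases lt_trichotomy x b with h | rfl | h
      · obtain ⟨B, hB, hxB⟩ := π₁.exists_mem (Finset.mem_range.2 h)
        by_cases hB0 : B = π₁.part 0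
        · exact ⟨insert b (π₁.part 0), Or.inl rfl, Finset.mem_insert_of_mem (hB0 ▸ hxB)⟩
        · exact ⟨B, Or.inr (Or.inl ⟨hB0, hB⟩), hxB⟩
      · exact ⟨insert x (π₁.part 0), Or.inl rfl, Finset.mem_insert_self _ _⟩
      · have hx2 : x ∈ Finset.Icc (b + 1) n := Finset.mem_Icc.2 ⟨by omega, by omega⟩
        obtain ⟨B, hB, hxB⟩ := π₂.exists_mem hx2
        exact ⟨B, Or.inr (Or.inr hB), hxB⟩
  bot_notMem := by
    simp only [bot_eq_empty, Finset.mem_insert, Finset.mem_union, Finset.mem_erase]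
    rintro (h | ⟨-, h⟩ | h)
    · exact absurd h.symm (Finset.insert_ne_empty _ _)
    · exact π₁.bot_notMem h
    · exact π₂.bot_notMem h

lemma glueP_parts : (glueP hb π₁ π₂).parts =
    insert (insert b (π₁.part 0)) (π₁.parts.erase (π₁.part 0) ∪ π₂.parts) := rfl

lemma glueP_part_zero : (glueP hb π₁ π₂).part 0 = insert b (π₁.part 0) := by
  apply Finpartition.part_eq_of_mem
  · exact Finset.mem_insert_self _ _
  · rcases Nat.eq_zero_or_pos b with rfl | hbpos
    · exact Finset.mem_insert_self _ _
    · exact Finset.mem_insert_of_mem (π₁.mem_part (Finset.mem_range.2 hbpos))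

lemma memS_le : ∀ x ∈ insert b (π₁.part 0), x ≤ b := by
  intro x hx
  rcases Finset.mem_insert.1 hx with rfl | hx
  · exact le_rfl
  · exact le_of_lt (part0_lt π₁ x hx)

lemma cap_left_S : insert b (π₁.part 0) ∩ Finset.range b = π₁.part 0 := by
  ext x
  simp only [Finset.mem_inter, Finset.mem_insert, Finset.mem_range]
  constructor
  · rintro ⟨rfl | hx, hlt⟩
    · omega
    · exact hx
  · intro hx
    exact ⟨Or.inr hx, part0_lt π₁ x hx⟩

lemma cap_left_1 {B : Finset ℕ} (hB : B ∈ π₁.parts) : B ∩ Finset.range b = B :=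
  Finset.inter_eq_left.2 (π₁.le hB)

lemma cap_left_2 {B : Finset ℕ} (hB : B ∈ π₂.parts) : B ∩ Finset.range b = ∅ := by
  ext x
  simp only [Finset.mem_inter, Finset.mem_range, Finset.notMem_empty, iff_false, not_and]
  intro hx
  have := p2_subset π₂ hB x hx
  omega

lemma cap_right_S : insert b (π₁.part 0) ∩ Finset.Icc (b + 1) n = ∅ := by
  ext x
  simp only [Finset.mem_inter, Finset.mem_Icc, Finset.notMem_empty, iff_false, not_and]
  intro hx
  have := memS_le π₁ x hx
  omega

lemma cap_right_1 {B : Finset ℕ} (hB : B ∈ π₁.parts) : B ∩ Finset.Icc (b + 1) n = ∅ := by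
  ext x
  simp only [Finset.mem_inter, Finset.mem_Icc, Finset.notMem_empty, iff_false, not_and]
  intro hx
  have := p1_subset π₁ hB x hx
  omega

lemma cap_right_2 {B : Finset ℕ} (hB : B ∈ π₂.parts) : B ∩ Finset.Icc (b + 1) n = B :=
  Finset.inter_eq_left.2 (π₂.le hB)

lemma restrict_glueP_left (hsub : Finset.range b ⊆ Finset.range (n + 1)) :
    restrictP (glueP hb π₁ π₂) (Finset.range b) hsub = π₁ := by
  ext1
  ext A
  rw [mem_restrictP]
  simp only [glueP_parts, Finset.mem_insert, Finset.mem_union, Finset.mem_erase]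
  constructor
  · rintro ⟨hA, B, (rfl | ⟨hB0, hB⟩ | hB), rfl⟩
    · rw [cap_left_S]
      exact part_mem_of_ne_empty π₁ (by rwa [cap_left_S π₁] at hA)
    · rwa [cap_left_1 π₁ hB]
    · exact absurd (cap_left_2 π₂ hB) hA
  · intro hA
    refine ⟨?_, ?_⟩
    · exact Finset.nonempty_iff_ne_empty.1 (π₁.nonempty_of_mem_parts hA)
    · by_cases hA0 : A = π₁.part 0
      · exact ⟨insert b (π₁.part 0), Or.inl rfl, by rw [cap_left_S, hA0]⟩
      · exact ⟨A, Or.inr (Or.inl ⟨hA0, hA⟩), cap_left_1 π₁ hA⟩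

lemma restrict_glueP_right (hsub : Finset.Icc (b + 1) n ⊆ Finset.range (n + 1)) :
    restrictP (glueP hb π₁ π₂) (Finset.Icc (b + 1) n) hsub = π₂ := by
  ext1
  ext A
  rw [mem_restrictP]
  simp only [glueP_parts, Finset.mem_insert, Finset.mem_union, Finset.mem_erase]
  constructor
  · rintro ⟨hA, B, (rfl | ⟨hB0, hB⟩ | hB), rfl⟩
    · exact absurd (cap_right_S π₁) hA
    · exact absurd (cap_right_1 π₁ hB) hA
    · rwa [cap_right_2 π₂ hB]
  · intro hA
    exact ⟨Finset.nonempty_iff_ne_empty.1 (π₂.nonempty_of_mem_parts hA),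
      A, Or.inr (Or.inr hA), cap_right_2 π₂ hA⟩

lemma NCg_glueP (h1 : NCg π₁) (h2 : NCg π₂) : NCg (glueP hb π₁ π₂) := by
  intro A₁ hA₁ A₂ hA₂ i j k l hij hjk hkl hi hk hj hl
  rw [glueP_parts] at hA₁ hA₂
  simp only [Finset.mem_insert, Finset.mem_union, Finset.mem_erase] at hA₁ hA₂
  rcases hA₁ with rfl | ⟨h10, h1m⟩ | h1m <;> rcases hA₂ with rfl | ⟨h20, h2m⟩ | h2m
  · rfl
  · -- A₁ = S*, A₂ ∈ π₁.parts minus part0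
    have hlb : l < b := p1_subset π₁ h2m l hl
    have hjb : j < b := p1_subset π₁ h2m j hj
    have hk' : k ∈ π₁.part 0 := by
      rcases Finset.mem_insert.1 hk with rfl | hk'
      · omega
      · exact hk'
    have hi' : i ∈ π₁.part 0 := by
      rcases Finset.mem_insert.1 hi with rfl | hi'
      · omega
      · exact hi'
    have h0 : π₁.part 0 ∈ π₁.parts := part_mem_of_ne_empty π₁ (by
      intro h; rw [h] at hi'; exact absurd hi' (Finset.notMem_empty i))
    exact absurd (h1 _ h0 _ h2m i j k l hij hjk hkl hi' hk' hj hl).symm h20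
  · -- A₁ = S*, A₂ ∈ π₂.parts
    have := p2_subset π₂ h2m j hj
    have := memS_le π₁ k hk
    exact absurd hjk (by omega)
  · -- A₁ ∈ π₁-erase, A₂ = S*
    have hkb : k < b := p1_subset π₁ h1m k hk
    have hib : i < b := p1_subset π₁ h1m i hi
    have hj' : j ∈ π₁.part 0 := by
      rcases Finset.mem_insert.1 hj with rfl | hj'
      · omega
      · exact hj'
    have h0 : π₁.part 0 ∈ π₁.parts := part_mem_of_ne_empty π₁ (by
      intro h; rw [h] at hj'; exact absurd hj' (Finset.notMem_empty j))
    rcases Finset.mem_insert.1 hl with hlb | hl'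
    · -- l = b
      have hbpos : 0 < b := by omega
      have h0mem : (0 : ℕ) ∈ π₁.part 0 := π₁.mem_part (Finset.mem_range.2 hbpos)
      rcases Nat.eq_zero_or_pos i with rfl | hipos
      · exact absurd hi (Finset.disjoint_left.1 (π₁.disjoint h0 h1m (Ne.symm h10)) h0mem)
      · exact absurd (h1 _ h0 _ h1m 0 i j k hipos hij hjk h0mem hj' hi hk).symm h10
    · exact absurd (h1 _ h1m _ h0 i j k l hij hjk hkl hi hk hj' hl') h10
  · exact h1 _ h1m _ h2m i j k l hij hjk hkl hi hk hj hl
  · -- A₁ ∈ π₁, A₂ ∈ π₂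
    have := p1_subset π₁ h1m k hk
    have := p2_subset π₂ h2m j hj
    exact absurd hjk (by omega)
  · -- A₁ ∈ π₂, A₂ = S*
    have := p2_subset π₂ h1m i hi
    have := memS_le π₁ j hj
    exact absurd hij (by omega)
  · -- A₁ ∈ π₂, A₂ ∈ π₁
    have := p2_subset π₂ h1m i hi
    have := p1_subset π₁ h2m j hj
    exact absurd hij (by omega)
  · exact h2 _ h1m _ h2m i j k l hij hjk hkl hi hk hj hl

lemma insert_not_mem_rest :
    insert b (π₁.part 0) ∉ π₁.parts.erase (π₁.part 0) ∪ π₂.parts := by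
  intro h
  rcases Finset.mem_union.1 h with h | h
  · exact absurd (p1_subset π₁ (Finset.mem_of_mem_erase h) b (Finset.mem_insert_self _ _))
      (lt_irrefl b)
  · have := p2_subset π₂ h b (Finset.mem_insert_self _ _)
    omega

lemma rest_disjoint : Disjoint (π₁.parts.erase (π₁.part 0)) π₂.parts := by
  rw [Finset.disjoint_left]
  intro A hA hA'
  obtain ⟨x, hx⟩ := π₂.nonempty_of_mem_parts hA'
  have := p1_subset π₁ (Finset.mem_of_mem_erase hA) x hx
  have := p2_subset π₂ hA' x hx
  omega

lemma NCg_glueP_iff : NCg (glueP hb π₁ π₂) ↔ NCg π₁ ∧ NCg π₂ := by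
  constructor
  · intro h
    constructor
    · rw [← restrict_glueP_left hb π₁ π₂ (Finset.range_subset_range.2 (by omega))]
      exact NCg_restrictP _ _ _ h
    · rw [← restrict_glueP_right hb π₁ π₂ (fun x hx => by
        simp only [Finset.mem_Icc] at hx; simp only [Finset.mem_range]; omega)]
      exact NCg_restrictP _ _ _ h
  · rintro ⟨h1, h2⟩
    exact NCg_glueP hb π₁ π₂ h1 h2

lemma F_glueP (r : ℕ → ℚ) (j : ℕ) :
    (if NCg (glueP hb π₁ π₂) then
        r (((glueP hb π₁ π₂).part 0).card + j) *
          ∏ B ∈ (glueP hb π₁ π₂).parts.erase ((glueP hb π₁ π₂).part 0), r B.card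
      else 0) =
    (if NCg π₁ then
        r ((π₁.part 0).card + (j + 1)) * ∏ B ∈ π₁.parts.erase (π₁.part 0), r B.card
      else 0) *
    (if NCg π₂ then ∏ B ∈ π₂.parts, r B.card else 0) := by
  rw [NCg_glueP_iff]
  by_cases h1 : NCg π₁
  · by_cases h2 : NCg π₂
    · rw [if_pos ⟨h1, h2⟩, if_pos h1, if_pos h2]
      have hc : ((glueP hb π₁ π₂).part 0).card = (π₁.part 0).card + 1 := by
        rw [glueP_part_zero, Finset.card_insert_of_notMem (fun h =>
          absurd (part0_lt π₁ b h) (lt_irrefl b))]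
      have he : (glueP hb π₁ π₂).parts.erase ((glueP hb π₁ π₂).part 0) =
          π₁.parts.erase (π₁.part 0) ∪ π₂.parts := by
        rw [glueP_part_zero, glueP_parts, Finset.erase_insert (insert_not_mem_rest π₁ π₂)]
      rw [hc, he, Finset.prod_union (rest_disjoint π₁ π₂)]
      have : (π₁.part 0).card + 1 + j = (π₁.part 0).card + (j + 1) := by omega
      rw [this]
      ring
    · rw [if_neg (fun h => h2 h.2), if_neg h2, mul_zero]
  · rw [if_neg (fun h => h1 h.1), if_neg h1, zero_mul]

end Glue

section Split

variable {n : ℕ} (π : Finpartition (Finset.range (n + 1)))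

lemma zero_mem_range : (0 : ℕ) ∈ Finset.range (n + 1) := Finset.mem_range.2 (Nat.succ_pos n)

lemma part_zero_mem : π.part 0 ∈ π.parts := π.part_mem.2 zero_mem_range

lemma straddle (hNC : NCg π) {b : ℕ} (hbmem : b ∈ π.part 0)
    (hbmax : ∀ x ∈ π.part 0, x ≤ b) {B : Finset ℕ} (hB : B ∈ π.parts)
    (hBne : B ≠ π.part 0) : (∀ x ∈ B, x < b) ∨ (∀ x ∈ B, b < x) := by
  have h0mem : (0 : ℕ) ∈ π.part 0 := π.mem_part zero_mem_range
  have hdis := π.disjoint hB (part_zero_mem π) hBne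
  by_cases hall : ∀ x ∈ B, x < b
  · exact Or.inl hall
  · right
    push_neg at hall
    obtain ⟨y, hy, hyb⟩ := hall
    have hyb' : b < y := lt_of_le_of_ne hyb (by
      rintro rfl
      exact Finset.disjoint_left.1 hdis hy hbmem)
    intro x hx
    by_contra hxb
    push_neg at hxb
    have hxb' : x < b := lt_of_le_of_ne hxb (by
      rintro rfl
      exact Finset.disjoint_left.1 hdis hx hbmem)
    have hx0 : 0 < x := Nat.pos_of_ne_zero (by
      rintro rfl
      exact Finset.disjoint_left.1 hdis hx h0mem)
    exact hBne.symm
      (hNC _ (part_zero_mem π) _ hB 0 x b y hx0 hxb' hyb' h0mem hbmem hx hy)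

lemma part_zero_le {b : ℕ} (hbmax : ∀ x ∈ π.part 0, x ≤ b)
    (hsub : Finset.range b ⊆ Finset.range (n + 1)) :
    (restrictP π (Finset.range b) hsub).part 0 = (π.part 0).erase b := by
  have hcap : π.part 0 ∩ Finset.range b = (π.part 0).erase b := by
    ext x
    simp only [Finset.mem_inter, Finset.mem_range, Finset.mem_erase]
    constructor
    · rintro ⟨hx, hlt⟩; exact ⟨by omega, hx⟩
    · rintro ⟨hne, hx⟩
      exact ⟨hx, lt_of_le_of_ne (hbmax x hx) hne⟩
  rcases Nat.eq_zero_or_pos b with rfl | hbpos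
  · have h1 : (restrictP π (Finset.range 0) hsub).part 0 = ∅ := by
      have : (0 : ℕ) ∉ Finset.range 0 := by simp
      simp [Finpartition.part, dif_neg this]
    rw [h1, ← hcap]
    simp
  · apply (restrictP π (Finset.range b) hsub).part_eq_of_mem
    · rw [mem_restrictP]
      refine ⟨?_, π.part 0, part_zero_mem π, hcap⟩
      intro h
      have h0 : (0 : ℕ) ∈ (π.part 0).erase b :=
        Finset.mem_erase.2 ⟨by omega, π.mem_part zero_mem_range⟩
      rw [h] at h0
      exact absurd h0 (Finset.notMem_empty 0)
    · exact Finset.mem_erase.2 ⟨by omega, π.mem_part zero_mem_range⟩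

lemma glueP_restrict (hNC : NCg π) {b : ℕ} (hb : b ≤ n) (hbmem : b ∈ π.part 0)
    (hbmax : ∀ x ∈ π.part 0, x ≤ b)
    (hsub1 : Finset.range b ⊆ Finset.range (n + 1))
    (hsub2 : Finset.Icc (b + 1) n ⊆ Finset.range (n + 1)) :
    glueP hb (restrictP π (Finset.range b) hsub1)
      (restrictP π (Finset.Icc (b + 1) n) hsub2) = π := by
  have hp0 := part_zero_le π hbmax hsub1
  have hins : insert b ((π.part 0).erase b) = π.part 0 := Finset.insert_erase hbmem
  ext1
  ext A
  rw [glueP_parts, hp0, hins]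
  simp only [Finset.mem_insert, Finset.mem_union, Finset.mem_erase, mem_restrictP]
  constructor
  · rintro (rfl | ⟨hA0, hAne, B, hB, rfl⟩ | ⟨hAne, B, hB, rfl⟩)
    · exact part_zero_mem π
    · by_cases hBe : B = π.part 0
      · subst hBe
        have hcap : π.part 0 ∩ Finset.range b = (π.part 0).erase b := by
          ext x
          simp only [Finset.mem_inter, Finset.mem_range, Finset.mem_erase]
          constructor
          · rintro ⟨hx, hlt⟩; exact ⟨by omega, hx⟩
          · rintro ⟨hne, hx⟩
            exact ⟨hx, lt_of_le_of_ne (hbmax x hx) hne⟩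
        exact absurd hcap hA0
      · rcases straddle π hNC hbmem hbmax hB hBe with h | h
        · rwa [Finset.inter_eq_left.2 (fun x hx => Finset.mem_range.2 (h x hx))]
        · have : B ∩ Finset.range b = ∅ := by
            ext x
            simp only [Finset.mem_inter, Finset.mem_range, Finset.notMem_empty, iff_false,
              not_and]
            intro hx
            have := h x hx
            omega
          exact absurd this hAne
    · by_cases hBe : B = π.part 0
      · subst hBe
        have : π.part 0 ∩ Finset.Icc (b + 1) n = ∅ := by
          ext x
          simp only [Finset.mem_inter, Finset.mem_Icc, Finset.notMem_empty, iff_false,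
            not_and]
          intro hx
          have := hbmax x hx
          omega
        exact absurd this hAne
      · rcases straddle π hNC hbmem hbmax hB hBe with h | h
        · have : B ∩ Finset.Icc (b + 1) n = ∅ := by
            ext x
            simp only [Finset.mem_inter, Finset.mem_Icc, Finset.notMem_empty, iff_false,
              not_and]
            intro hx
            have := h x hx
            omega
          exact absurd this hAne
        · rw [Finset.inter_eq_left.2 (fun x hx => Finset.mem_Icc.2
            ⟨h x hx, by have := Finset.mem_range.1 (π.le hB hx); omega⟩)]
          exact hB
  · intro hA
    by_cases hAe : A = π.part 0
    · exact Or.inl hAe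
    · have hAne := Finset.nonempty_iff_ne_empty.1 (π.nonempty_of_mem_parts hA)
      rcases straddle π hNC hbmem hbmax hA hAe with h | h
      · refine Or.inr (Or.inl ⟨?_, hAne, A, hA, Finset.inter_eq_left.2
          (fun x hx => Finset.mem_range.2 (h x hx))⟩)
        intro hEq
        obtain ⟨y, hy⟩ := π.nonempty_of_mem_parts hA
        have hy0 : y ∈ π.part 0 := Finset.mem_of_mem_erase (hEq ▸ hy)
        exact Finset.disjoint_left.1 (π.disjoint hA (part_zero_mem π) hAe) hy hy0
      · exact Or.inr (Or.inr ⟨hAne, A, hA, Finset.inter_eq_left.2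
          (fun x hx => Finset.mem_Icc.2 ⟨h x hx,
            by have := Finset.mem_range.1 (π.le hA hx); omega⟩)⟩)

end Split

section Star

variable (r : ℕ → ℚ)

lemma parts_range_zero (π : Finpartition (Finset.range 0 : Finset ℕ)) : π.parts = ∅ :=
  Finpartition.parts_eq_empty_iff.2 (by simp)

lemma card_finpartition_range_zero :
    Fintype.card (Finpartition (Finset.range 0 : Finset ℕ)) = 1 := by
  refine Fintype.card_eq_one_iff.2 ⟨(Finpartition.empty (Finset ℕ)).copy (by simp), ?_⟩
  intro π
  ext1
  rw [parts_range_zero, parts_range_zero]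

lemma NCg_range_zero (π : Finpartition (Finset.range 0 : Finset ℕ)) : NCg π := by
  intro B hB
  rw [parts_range_zero] at hB
  exact absurd hB (Finset.notMem_empty B)

lemma part_range_zero (π : Finpartition (Finset.range 0 : Finset ℕ)) (a : ℕ) :
    π.part a = ∅ := by
  have : a ∉ Finset.range 0 := by simp
  simp [Finpartition.part, dif_neg this]

lemma Vsum_zero (j : ℕ) : Vsum r j 0 = r j := by
  rw [Vsum]
  have h : ∀ π : Finpartition (Finset.range 0 : Finset ℕ),
      (if NCg π then r ((π.part 0).card + j) * ∏ B ∈ π.parts.erase (π.part 0), r B.card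
        else 0) = r j := by
    intro π
    rw [if_pos (NCg_range_zero π), part_range_zero, parts_range_zero]
    simp
  rw [Finset.sum_congr rfl (fun π _ => h π), Finset.sum_const, Finset.card_univ,
    card_finpartition_range_zero, one_smul]

lemma Wsum_range_zero (F : ℕ → ℚ) : Wsum F (Finset.range 0 : Finset ℕ) = 1 := by
  rw [Wsum]
  have h : ∀ π : Finpartition (Finset.range 0 : Finset ℕ),
      (if NCg π then ∏ B ∈ π.parts, F B.card else 0) = 1 := by
    intro π
    rw [if_pos (NCg_range_zero π), parts_range_zero]
    simp
  rw [Finset.sum_congr rfl (fun π _ => h π), Finset.sum_const, Finset.card_univ,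
    card_finpartition_range_zero, one_smul]

lemma star (n j : ℕ) :
    Vsum r j (n + 1) =
      ∑ b ∈ Finset.range (n + 1), Vsum r (j + 1) b * Wsum r (Finset.Icc (b + 1) n) := by
  classical
  set G : (Σ b : ℕ, Finpartition (Finset.range b) × Finpartition (Finset.Icc (b + 1) n)) → ℚ :=
    fun x =>
      (if NCg x.2.1 then
          r ((x.2.1.part 0).card + (j + 1)) * ∏ B ∈ x.2.1.parts.erase (x.2.1.part 0), r B.card
        else 0) *
      (if NCg x.2.2 then ∏ B ∈ x.2.2.parts, r B.card else 0) with hG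
  have step1 : ∑ b ∈ Finset.range (n + 1), Vsum r (j + 1) b * Wsum r (Finset.Icc (b + 1) n)
      = ∑ x ∈ (Finset.range (n + 1)).sigma
          (fun b => (Finset.univ : Finset (Finpartition (Finset.range b) ×
            Finpartition (Finset.Icc (b + 1) n)))), G x := by
    rw [Finset.sum_sigma]
    refine Finset.sum_congr rfl fun b _ => ?_
    rw [Vsum, Wsum, Finset.sum_mul_sum, ← Finset.univ_product_univ, Finset.sum_product]
  rw [step1, Vsum]
  symm
  refine Finset.sum_bij_ne_zero
    (i := fun x hx _ => glueP (n := n) (b := x.1)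
      (by have := (Finset.mem_sigma.1 hx).1; rw [Finset.mem_range] at this; omega)
      x.2.1 x.2.2) ?_ ?_ ?_ ?_
  · intro a h₁ h₂
    exact Finset.mem_univ _
  · rintro ⟨b₁, π₁, ρ₁⟩ ha₁ hz₁ ⟨b₂, π₂, ρ₂⟩ ha₂ hz₂ heq
    have hb₁ : b₁ ≤ n := Nat.lt_succ_iff.1 (Finset.mem_range.1 (Finset.mem_sigma.1 ha₁).1)
    have hb₂ : b₂ ≤ n := Nat.lt_succ_iff.1 (Finset.mem_range.1 (Finset.mem_sigma.1 ha₂).1)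
    have heq' : glueP hb₁ π₁ ρ₁ = glueP hb₂ π₂ ρ₂ := heq
    have h0 : insert b₁ (π₁.part 0) = insert b₂ (π₂.part 0) := by
      rw [← glueP_part_zero hb₁ π₁ ρ₁, ← glueP_part_zero hb₂ π₂ ρ₂]
      rw [heq']
    have hbb : b₁ = b₂ := by
      have h1 : b₁ ≤ b₂ := memS_le π₂ b₁ (h0 ▸ Finset.mem_insert_self _ _)
      have h2 : b₂ ≤ b₁ := memS_le π₁ b₂ (h0 ▸ Finset.mem_insert_self _ _)
      omega
    subst hbb
    have e1 : π₁ = π₂ := by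
      rw [← restrict_glueP_left hb₁ π₁ ρ₁ (Finset.range_subset_range.2 (by omega)),
        ← restrict_glueP_left hb₁ π₂ ρ₂ (Finset.range_subset_range.2 (by omega))]
      rw [heq']
    have e2 : ρ₁ = ρ₂ := by
      have hsub : Finset.Icc (b₁ + 1) n ⊆ Finset.range (n + 1) := fun x hx => by
        simp only [Finset.mem_Icc] at hx; simp only [Finset.mem_range]; omega
      rw [← restrict_glueP_right hb₁ π₁ ρ₁ hsub, ← restrict_glueP_right hb₁ π₂ ρ₂ hsub]
      rw [heq']
    rw [e1, e2]
  · intro π _ hπz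
    have hNC : NCg π := by
      by_contra h
      exact hπz (if_neg h)
    have hne : (π.part 0).Nonempty := ⟨0, π.mem_part zero_mem_range⟩
    set b := (π.part 0).max' hne with hbdef
    have hbmem : b ∈ π.part 0 := Finset.max'_mem _ hne
    have hbmax : ∀ x ∈ π.part 0, x ≤ b := fun x hx => Finset.le_max' _ x hx
    have hb : b ≤ n := by
      have := π.le (part_zero_mem π) hbmem
      rw [Finset.mem_range] at this
      omega
    have hsub1 : Finset.range b ⊆ Finset.range (n + 1) := Finset.range_subset_range.2 (by omega)
    have hsub2 : Finset.Icc (b + 1) n ⊆ Finset.range (n + 1) := fun x hx => by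
      simp only [Finset.mem_Icc] at hx; simp only [Finset.mem_range]; omega
    have hglue : glueP hb (restrictP π (Finset.range b) hsub1)
        (restrictP π (Finset.Icc (b + 1) n) hsub2) = π :=
      glueP_restrict π hNC hb hbmem hbmax hsub1 hsub2
    refine ⟨⟨b, (restrictP π (Finset.range b) hsub1, restrictP π (Finset.Icc (b + 1) n) hsub2)⟩,
      Finset.mem_sigma.2 ⟨Finset.mem_range.2 (Nat.lt_succ_iff.2 hb), Finset.mem_univ _⟩, ?_, ?_⟩
    · show G _ ≠ 0
      rw [hG]
      dsimp only
      rw [← F_glueP hb _ _ r j, hglue]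
      exact hπz
    · exact hglue
  · rintro ⟨b, π₁, ρ₁⟩ ha hz
    have hb : b ≤ n := Nat.lt_succ_iff.1 (Finset.mem_range.1 (Finset.mem_sigma.1 ha).1)
    exact (F_glueP hb π₁ ρ₁ r j).symm

noncomputable def Sn (k : ℕ) : ℚ := Wsum r (Finset.range k : Finset ℕ)

lemma Wsum_Icc (b n : ℕ) (hb : b ≤ n) :
    Wsum r (Finset.Icc (b + 1) n) = Sn r (n - b) := by
  have hmap : (Finset.range (n - b)).map ⟨fun x => b + 1 + x, add_right_injective (b + 1)⟩
      = Finset.Icc (b + 1) n := by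
    ext x
    simp only [Finset.mem_map, Finset.mem_range, Finset.mem_Icc, Function.Embedding.coeFn_mk]
    constructor
    · rintro ⟨y, hy, rfl⟩; omega
    · intro hx; exact ⟨x - (b + 1), by omega, by omega⟩
  rw [Sn, ← hmap, Wsum_map _ (fun x y => by
    simp only [Function.Embedding.coeFn_mk]; omega)]

lemma Sn_eq_Vsum (hr0 : r 0 = 1) (k : ℕ) : Sn r k = Vsum r 0 k := by
  cases k with
  | zero => rw [Sn, Wsum_range_zero, Vsum_zero, hr0]
  | succ k =>
    rw [Sn, Wsum, Vsum]
    refine Finset.sum_congr rfl fun π _ => ?_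
    by_cases h : NCg π
    · rw [if_pos h, if_pos h, add_zero]
      exact (Finset.mul_prod_erase _ _ (part_zero_mem π)).symm
    · rw [if_neg h, if_neg h]

lemma coeff_pow_zero_of_lt (F : PowerSeries ℚ) {c k : ℕ} (h : c < k) :
    coeff c ((X * F) ^ k) = 0 := by
  rw [mul_pow, PowerSeries.coeff_X_pow_mul', if_neg (by omega)]

lemma V_coeff (hr0 : r 0 = 1) : ∀ n j, Vsum r j n =
    ∑ k ∈ Finset.range (n + 1), r (j + k) * coeff n ((X * PowerSeries.mk (Sn r)) ^ k) := by
  intro n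
  induction n using Nat.strong_induction_on with
  | _ n IH =>
    rcases n with _ | n
    · intro j
      rw [Vsum_zero, Finset.sum_range_one, pow_zero, coeff_zero_one, add_zero, mul_one]
    · intro j
      set C := X * PowerSeries.mk (Sn r) with hC
      have hsplit : ∑ k ∈ Finset.range (n + 2), r (j + k) * coeff (n + 1) (C ^ k)
          = ∑ k ∈ Finset.range (n + 1), r (j + (k + 1)) * coeff (n + 1) (C ^ (k + 1)) := by
        rw [Finset.sum_range_succ']
        have hz : r (j + 0) * coeff (n + 1) (C ^ 0) = 0 := by
          rw [pow_zero, PowerSeries.coeff_one, if_neg (Nat.succ_ne_zero n), mul_zero]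
        rw [hz, add_zero]
      have hcoeff : ∀ k, coeff (n + 1) (C ^ (k + 1))
          = ∑ c ∈ Finset.range (n + 1), Sn r c * coeff (n - c) (C ^ k) := by
        intro k
        have h1 : C ^ (k + 1) = X * (PowerSeries.mk (Sn r) * C ^ k) := by rw [hC]; ring
        rw [h1, PowerSeries.coeff_succ_X_mul, PowerSeries.coeff_mul,
          Finset.Nat.sum_antidiagonal_eq_sum_range_succ_mk]
        exact Finset.sum_congr rfl fun c _ => by rw [PowerSeries.coeff_mk]
      have htrunc : ∀ c ≤ n, ∑ k ∈ Finset.range (n + 1), r (j + 1 + k) * coeff (n - c) (C ^ k)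
          = Vsum r (j + 1) (n - c) := by
        intro c hc
        rw [IH (n - c) (by omega) (j + 1)]
        refine (Finset.sum_subset (Finset.range_subset_range.2 (by omega)) ?_).symm
        intro k hk hk'
        rw [Finset.mem_range] at hk hk'
        rw [coeff_pow_zero_of_lt _ (by omega), mul_zero]
      have key : ∑ k ∈ Finset.range (n + 2), r (j + k) * coeff (n + 1) (C ^ k)
          = ∑ c ∈ Finset.range (n + 1), Sn r c * Vsum r (j + 1) (n - c) := by
        rw [hsplit]
        have hterm : ∀ k ∈ Finset.range (n + 1), r (j + (k + 1)) * coeff (n + 1) (C ^ (k + 1))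
            = ∑ c ∈ Finset.range (n + 1),
                Sn r c * (r (j + 1 + k) * coeff (n - c) (C ^ k)) := by
          intro k _
          rw [hcoeff k, Finset.mul_sum]
          refine Finset.sum_congr rfl fun c _ => ?_
          have : j + (k + 1) = j + 1 + k := by omega
          rw [this]
          ring
        rw [Finset.sum_congr rfl hterm, Finset.sum_comm]
        exact Finset.sum_congr rfl fun c hc => by
          rw [← Finset.mul_sum, htrunc c (Nat.lt_succ_iff.1 (Finset.mem_range.1 hc))]
      rw [key, star r n j]
      have h1 : ∀ b ∈ Finset.range (n + 1),
          Vsum r (j + 1) b * Wsum r (Finset.Icc (b + 1) n)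
          = Vsum r (j + 1) b * Sn r (n - b) := fun b hb => by
        rw [Wsum_Icc r b n (Nat.lt_succ_iff.1 (Finset.mem_range.1 hb))]
      rw [Finset.sum_congr rfl h1,
        ← Finset.sum_range_reflect (fun b => Vsum r (j + 1) b * Sn r (n - b)) (n + 1)]
      refine Finset.sum_congr rfl fun c hc => ?_
      rw [Finset.mem_range] at hc
      have e1 : n + 1 - 1 - c = n - c := by omega
      have e2 : n - (n - c) = c := by omega
      rw [e1, e2, mul_comm]

lemma Sn_recur (hr0 : r 0 = 1) (N : ℕ) : Sn r N =
    ∑ k ∈ Finset.range (N + 1), r k * coeff N ((X * PowerSeries.mk (Sn r)) ^ k) := by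
  rw [Sn_eq_Vsum r hr0, V_coeff r hr0 N 0]
  exact Finset.sum_congr rfl fun k _ => by rw [Nat.zero_add]

lemma coeff_agree (f g : ℕ → ℚ) (N : ℕ) (h : ∀ i < N, f i = g i) :
    ∀ k, ∀ i ≤ N,
      coeff i ((X * PowerSeries.mk f) ^ k) = coeff i ((X * PowerSeries.mk g) ^ k) := by
  intro k
  induction k with
  | zero => intro i _; rfl
  | succ k IHk =>
    intro i hi
    have h1 : (X * PowerSeries.mk f) ^ (k + 1)
        = X * (PowerSeries.mk f * (X * PowerSeries.mk f) ^ k) := by ring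
    have h2 : (X * PowerSeries.mk g) ^ (k + 1)
        = X * (PowerSeries.mk g * (X * PowerSeries.mk g) ^ k) := by ring
    rw [h1, h2]
    rcases i with _ | i
    · rw [PowerSeries.coeff_zero_X_mul, PowerSeries.coeff_zero_X_mul]
    · rw [PowerSeries.coeff_succ_X_mul, PowerSeries.coeff_succ_X_mul,
        PowerSeries.coeff_mul, PowerSeries.coeff_mul]
      refine Finset.sum_congr rfl fun p hp => ?_
      rw [Finset.HasAntidiagonal.mem_antidiagonal] at hp
      rw [PowerSeries.coeff_mk, PowerSeries.coeff_mk, h p.1 (by omega), IHk p.2 (by omega)]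

end Star

end NCaux

/-- if `M(t) = R(tM(t))`, then Speicher's free moment-cumulant relation
holds: `m_n = Σ_{π noncrossing partition of {1,…,n}} ∏_{B ∈ π} r_{|B|}`. -/
theorem stmt18 (m r : ℕ → ℚ) (hm0 : m 0 = 1) (hr0 : r 0 = 1)
    (hrel : PowerSeries.mk m = psComp (PowerSeries.mk r) (X * PowerSeries.mk m)) :
    ∀ n : ℕ, 1 ≤ n →
      m n = ∑ π : Finpartition (Finset.univ : Finset (Fin n)),
        if Noncrossing π then ∏ B ∈ π.parts, r B.card else 0 := by
  have master : ∀ N, m N = Sn r N := by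
    intro N
    induction N using Nat.strong_induction_on with
    | _ N IH =>
      have hcoeff : m N = coeff N (psComp (PowerSeries.mk r) (X * PowerSeries.mk m)) := by
        conv_lhs => rw [← PowerSeries.coeff_mk N m, hrel]
      have hco : coeff N (psComp (PowerSeries.mk r) (X * PowerSeries.mk m))
          = ∑ k ∈ Finset.range (N + 1), r k * coeff N ((X * PowerSeries.mk m) ^ k) := by
        rw [psComp, PowerSeries.coeff_mk]
        exact Finset.sum_congr rfl fun k _ => by rw [PowerSeries.coeff_mk]
      rw [hcoeff, hco,
        Finset.sum_congr rfl (fun k _ => by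
          rw [coeff_agree m (Sn r) N (fun i hi => IH i hi) k N le_rfl])]
      exact (Sn_recur r hr0 N).symm
  intro n _
  have htrans : Sn r n = Wsum r (Finset.univ : Finset (Fin n)) := by
    rw [Sn, show Finset.range n = Finset.Iio n from (Nat.Iio_eq_range (a := n)).symm, ← Fin.map_valEmbedding_univ,
      Wsum_map Fin.valEmbedding (fun a b => Iff.rfl) r Finset.univ]
  rw [master n, htrans, Wsum]
  have hinst : ∀ (i1 i2 : Fintype (Finpartition (Finset.univ : Finset (Fin n)))),
      @Finset.univ _ i1 = @Finset.univ _ i2 := fun i1 i2 => by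
    congr 1
    exact Subsingleton.elim _ _
  exact Finset.sum_congr (hinst _ _) (fun π _ => if_congr Iff.rfl rfl rfl)
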